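/- Let D be the m×n matrix (m ≤ n) whose first row consists of independent variables x_1,…,x_n and whose remaining rows are constant complex vectors. Then the m×m minors of D, which are linear forms in x_1,…,x_n, span a subspace of dimension at most n − m + 1 in the space of linear forms. -/

import Mathlib

open Module Submodule

theorem minors_of_variable_row_matrix_span_bound (m n : ℕ) (hm : 0 < m)
    (hmn : m ≤ n) (a : Fin m → Fin n → ℂ) :
    Module.finrank ℂ (Submodule.span ℂ
      { f : (Fin n → ℂ) → ℂ | ∃ s : Fin m → Fin n, StrictMono s ∧
          f = fun x => Matrix.det (Matrix.of fun (i j : Fin m) =>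
            if i = (⟨0, hm⟩ : Fin m) then x (s j) else a i (s j)) })
      ≤ n - m + 1 := by
  set z : Fin m := ⟨0, hm⟩ with hz
  by_cases hind : LinearIndependent ℂ (fun i : {i : Fin m // i ≠ z} => a i)
  · -- independent case
    set W : Submodule ℂ (Fin n → ℂ) :=
      Submodule.span ℂ (Set.range fun i : {i : Fin m // i ≠ z} => a i) with hW
    have hle : Submodule.span ℂ
        { f : (Fin n → ℂ) → ℂ | ∃ s : Fin m → Fin n, StrictMono s ∧
          f = fun x => Matrix.det (Matrix.of fun (i j : Fin m) =>
            if i = z then x (s j) else a i (s j)) } ≤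
        Submodule.map (LinearMap.ltoFun ℂ (Fin n → ℂ) ℂ ℂ) W.dualAnnihilator := by
      rw [Submodule.span_le]
      rintro f ⟨s, -, rfl⟩
      set L : (Fin n → ℂ) →ₗ[ℂ] ℂ :=
        ((Matrix.detRowAlternating (R := ℂ) (n := Fin m)).toMultilinearMap.toLinearMap
          (fun i j => a i (s j)) z).comp (LinearMap.funLeft ℂ ℂ s) with hL
      have hLx : ∀ x : Fin n → ℂ, L x = Matrix.det (Matrix.of fun (i j : Fin m) =>
          if i = z then x (s j) else a i (s j)) := by
        intro x
        have e : Function.update (fun (i : Fin m) (j : Fin m) => a i (s j)) z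
            ((LinearMap.funLeft ℂ ℂ s) x) =
            fun i j => if i = z then x (s j) else a i (s j) := by
          funext i j
          rw [Function.update_apply]
          split_ifs <;> rfl
        simp only [hL, LinearMap.comp_apply, MultilinearMap.toLinearMap_apply]
        rw [e]
        rfl
      refine ⟨L, ?_, by funext x; exact hLx x⟩
      show L ∈ W.dualAnnihilator
      rw [Submodule.mem_dualAnnihilator]
      intro w hw
      have hker : W ≤ LinearMap.ker L := by
        rw [hW, Submodule.span_le]
        rintro _ ⟨i, rfl⟩
        have hL0 : L (a ↑i) = 0 := by
          rw [hLx]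
          have h2 : (Matrix.of fun (i' j : Fin m) =>
              if i' = z then (a ↑i) (s j) else a i' (s j)) z =
              (Matrix.of fun (i' j : Fin m) =>
              if i' = z then (a ↑i) (s j) else a i' (s j)) ↑i := by
            funext j
            simp [Matrix.of_apply, i.2]
          exact Matrix.detRowAlternating.map_eq_zero_of_eq _ h2 (Ne.symm i.2)
        simpa [LinearMap.mem_ker] using hL0
      exact hker hw
    have hWfin : FiniteDimensional ℂ W := by
      apply FiniteDimensional.span_of_finite
      exact Set.finite_range _
    have hWrank : finrank ℂ W = m - 1 := by
      rw [hW, finrank_span_eq_card hind]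
      simp [Fintype.card_subtype_compl]
    have hann : finrank ℂ W.dualAnnihilator = n - m + 1 := by
      have h1 := Submodule.finrank_quotient_add_finrank W
      have h2 : finrank ℂ (Fin n → ℂ) = n := by simp
      have h3 : finrank ℂ W.dualAnnihilator = finrank ℂ ((Fin n → ℂ) ⧸ W) :=
        (Subspace.quotEquivAnnihilator W).finrank_eq.symm
      omega
    calc finrank ℂ (Submodule.span ℂ _)
        ≤ finrank ℂ (Submodule.map (LinearMap.ltoFun ℂ (Fin n → ℂ) ℂ ℂ) W.dualAnnihilator) :=
          Submodule.finrank_mono hle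
      _ ≤ finrank ℂ W.dualAnnihilator := Submodule.finrank_map_le _ _
      _ = n - m + 1 := hann
  · -- dependent case : all minors vanish
    have hzero : ∀ s : Fin m → Fin n, (fun x => Matrix.det (Matrix.of fun (i j : Fin m) =>
        if i = z then x (s j) else a i (s j))) = (0 : (Fin n → ℂ) → ℂ) := by
      intro s
      obtain ⟨g, hgsum, i₀, hgi₀⟩ := Fintype.not_linearIndependent_iff.mp hind
      funext x
      set M : Matrix (Fin m) (Fin m) ℂ := Matrix.of fun (i j : Fin m) =>
        if i = z then x (s j) else a i (s j) with hM
      set c : Fin m → ℂ := fun i => if h : i = z then 0 else g ⟨i, h⟩ with hc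
      have hcne : c ≠ 0 := by
        intro h
        apply hgi₀
        have := congrFun h ↑i₀
        simpa [hc, i₀.2] using this
      have hmul : Matrix.vecMul c M = 0 := by
        funext j
        have hrel : ∑ i : {i : Fin m // i ≠ z}, g i * a ↑i (s j) = 0 := by
          have := congrFun hgsum (s j)
          simpa using this
        have hv : Matrix.vecMul c M j = ∑ i : Fin m, c i * M i j := by
          simp [Matrix.vecMul, dotProduct]
        rw [hv]
        have hsum : ∑ i : Fin m, c i * M i j = ∑ i : {i : Fin m // i ≠ z}, g i * a ↑i (s j) :=
          calc ∑ i : Fin m, c i * M i j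
              = ∑ i ∈ Finset.univ.erase z, c i * M i j :=
                (Finset.sum_erase _ (by simp [hc])).symm
            _ = ∑ i : {i : Fin m // i ≠ z}, c ↑i * M ↑i j :=
                Finset.sum_subtype _ (by intro i; simp [Finset.mem_erase]) _
            _ = ∑ i : {i : Fin m // i ≠ z}, g i * a ↑i (s j) :=
                Finset.sum_congr rfl (fun i _ => by simp [hc, hM, i.2])
        rw [hv] at *
        rw [hsum, hrel]
        rfl
      have hdet : M.det = 0 := Matrix.exists_vecMul_eq_zero_iff.mp ⟨c, hcne, hmul⟩
      simpa [hM] using hdet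
    have hsub : { f : (Fin n → ℂ) → ℂ | ∃ s : Fin m → Fin n, StrictMono s ∧
          f = fun x => Matrix.det (Matrix.of fun (i j : Fin m) =>
            if i = z then x (s j) else a i (s j)) } ⊆ {0} := by
      rintro f ⟨s, -, rfl⟩
      exact hzero s
    have hbot : Submodule.span ℂ { f : (Fin n → ℂ) → ℂ | ∃ s : Fin m → Fin n, StrictMono s ∧
          f = fun x => Matrix.det (Matrix.of fun (i j : Fin m) =>
            if i = z then x (s j) else a i (s j)) } ≤ ⊥ := by
      refine le_trans (Submodule.span_mono hsub) ?_
      rw [Submodule.span_zero_singleton]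
    have hb := le_bot_iff.mp hbot
    rw [hb]
    simp
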